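/- arXiv:1103.2349 — 11 statements merged into one kernel-verified Lean document; each statement's English description precedes it below -/
import Mathlib

section
/- For every y ∈ ℓ¹, ⟨y, G(y)⟩ = ∑_n y_n (G(y))_n = 0; that is, the Gossez operator is anti-symmetric in the sense that the associated quadratic form vanishes. -/
open Filter Topology

/-- The Gossez operator, with sequences indexed from `0`:
entry `n` (paper index `n+1`) is `∑_{i ≥ n+1} y i − ∑_{i ≤ n-1} y i`. -/
noncomputable def G (y : ℕ → ℝ) (n : ℕ) : ℝ :=
  (∑' i : ℕ, y (n + 1 + i)) - ∑ i ∈ Finset.range n, y i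


/-- The quadratic form of the Gossez operator vanishes: `⟪y, G y⟫ = 0`. -/
theorem gossez_quadratic_form_zero (y : ℕ → ℝ) (hy : Summable fun i => |y i|) :
    ∑' n, y n * G y n = 0 := by
  have hy' : Summable y := summable_abs_iff.mp hy
  set T : ℝ := ∑' n, y n with hT
  set S : ℕ → ℝ := fun N => ∑ i ∈ Finset.range N, y i with hS
  set A : ℝ := ∑' n, |y n| with hA
  have hG : ∀ n, G y n = T - S (n + 1) - S n := by
    intro n
    have h := Summable.sum_add_tsum_nat_add (n + 1) hy'
    have htail : (∑' i, y (n + 1 + i)) = T - S (n + 1) := by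
      have : (fun i => y (n + 1 + i)) = fun i => y (i + (n + 1)) := by
        funext i; rw [add_comm]
      rw [this]
      linarith [h]
    simp [G, htail, S]
  -- bounds
  have hSle : ∀ N, |S N| ≤ A := by
    intro N
    calc |S N| ≤ ∑ i ∈ Finset.range N, |y i| := Finset.abs_sum_le_sum_abs _ _
      _ ≤ A := Summable.sum_le_tsum _ (fun i _ => abs_nonneg _) hy
  have hTle : |T| ≤ A := by
    have hynorm : Summable fun n => ‖y n‖ := by simpa [Real.norm_eq_abs] using hy
    have h := norm_tsum_le_tsum_norm hynorm
    simpa [Real.norm_eq_abs, hT, hA] using h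
  have hsum : Summable fun n => y n * G y n := by
    rw [← summable_abs_iff]
    refine Summable.of_nonneg_of_le (fun n => abs_nonneg _) ?_ (hy.mul_left (3 * A))
    · intro n
      rw [abs_mul, hG n]
      have : |T - S (n + 1) - S n| ≤ 3 * A := by
        have h1 := hSle (n + 1)
        have h2 := hSle n
        have := abs_sub_abs_le_abs_sub T (S (n+1) + S n)
        calc |T - S (n + 1) - S n| = |T - (S (n+1) + S n)| := by ring_nf
          _ ≤ |T| + |S (n+1) + S n| := abs_sub _ _
          _ ≤ |T| + (|S (n+1)| + |S n|) := by linarith [abs_add_le (S (n+1)) (S n)]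
          _ ≤ 3 * A := by linarith
      calc |y n| * |T - S (n + 1) - S n| ≤ |y n| * (3 * A) :=
            mul_le_mul_of_nonneg_left this (abs_nonneg _)
        _ = 3 * A * |y n| := by ring
  have hpartial : ∀ N, ∑ n ∈ Finset.range N, y n * G y n = T * S N - S N ^ 2 := by
    intro N
    induction N with
    | zero => simp [S]
    | succ N ih =>
      rw [Finset.sum_range_succ, ih, hG N]
      have hstep : S (N + 1) = S N + y N := Finset.sum_range_succ y N
      rw [hstep]; ring
  have hlim : Tendsto S atTop (𝓝 T) := hy'.hasSum.tendsto_sum_nat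
  have h1 : Tendsto (fun N => T * S N - S N ^ 2) atTop (𝓝 0) := by
    have : Tendsto (fun N => T * S N - S N ^ 2) atTop (𝓝 (T * T - T ^ 2)) :=
      (tendsto_const_nhds.mul hlim).sub (hlim.pow 2)
    simpa [sq] using this
  have h2 : Tendsto (fun N => ∑ n ∈ Finset.range N, y n * G y n) atTop
      (𝓝 (∑' n, y n * G y n)) := hsum.hasSum.tendsto_sum_nat
  have h2' : Tendsto (fun N => T * S N - S N ^ 2) atTop (𝓝 (∑' n, y n * G y n)) := by
    simpa [hpartial] using h2
  exact tendsto_nhds_unique h2' h1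
end

section
/- The Gossez operator satisfies the anti-symmetry identity ⟨x, G(y)⟩ = −⟨y, G(x)⟩ for all x, y ∈ ℓ¹. -/
open Filter Topology

/-- Sign kernel. -/
noncomputable def gossezS (n m : ℕ) : ℝ :=
  if n < m then 1 else if m < n then -1 else 0

lemma gossezS_antisymm (n m : ℕ) : gossezS m n = - gossezS n m := by
  unfold gossezS
  rcases lt_trichotomy n m with h | h | h
  · simp [h, h.not_gt, not_lt.2 h.le]
  · simp [h]
  · simp [h, h.not_gt, not_lt.2 h.le]

lemma abs_gossezS_le (n m : ℕ) : |gossezS n m| ≤ 1 := by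
  unfold gossezS; split_ifs <;> simp

lemma hasSum_G (y : ℕ → ℝ) (hy : Summable y) (n : ℕ) :
    HasSum (fun m => gossezS n m * y m) (G y n) := by
  have hinj : Function.Injective (fun i : ℕ => n + 1 + i) := fun a b h => by
    simpa using h
  have hsum : Summable (fun i : ℕ => y (n + 1 + i)) := hy.comp_injective hinj
  have h1 : HasSum (fun m => if n < m then y m else 0) (∑' i : ℕ, y (n + 1 + i)) := by
    rw [← Function.Injective.hasSum_iff hinj (f := fun m => if n < m then y m else 0)
      (by intro m hm
          have : ¬ n < m := fun hc => hm ⟨m - (n+1), show n + 1 + (m - (n+1)) = m by omega⟩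
          simp [this])]
    have : ((fun m => if n < m then y m else 0) ∘ fun i : ℕ => n + 1 + i)
        = fun i => y (n + 1 + i) := by
      ext i; simp [show n < n + 1 + i by omega]
    rw [this]
    exact hsum.hasSum
  have h2 : HasSum (fun m => if m < n then y m else 0) (∑ i ∈ Finset.range n, y i) := by
    have h := hasSum_sum_of_ne_finset_zero (L := SummationFilter.unconditional ℕ) (s := Finset.range n)
      (f := fun m => if m < n then y m else 0)
      (by intro b hb; simp only [Finset.mem_range] at hb; simp [hb])
    convert h using 1
    apply Finset.sum_congr rfl
    intro i hi
    simp only [Finset.mem_range] at hi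
    simp [hi]
  have h := h1.sub h2
  convert h using 1
  · rfl
  ext m
  unfold gossezS
  rcases lt_trichotomy n m with h | h | h
  · simp [h, h.not_gt, not_lt.2 h.le]
  · simp [h]
  · simp [h, h.not_gt, not_lt.2 h.le]
  rfl

lemma gossez_summable (x y : ℕ → ℝ)
    (hx : Summable fun i => |x i|) (hy : Summable fun i => |y i|) :
    Summable (fun p : ℕ × ℕ => x p.1 * (gossezS p.1 p.2 * y p.2)) := by
  apply Summable.of_abs
  have hg : Summable (fun p : ℕ × ℕ => |x p.1| * |y p.2|) :=
    hx.mul_of_nonneg hy (fun _ => abs_nonneg _) (fun _ => abs_nonneg _)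
  refine Summable.of_nonneg_of_le (fun p => abs_nonneg _) (fun p => ?_) hg
  rw [abs_mul, abs_mul]
  have h1 : |gossezS p.1 p.2| * |y p.2| ≤ 1 * |y p.2| :=
    mul_le_mul_of_nonneg_right (abs_gossezS_le _ _) (abs_nonneg _)
  calc |x p.1| * (|gossezS p.1 p.2| * |y p.2|)
      ≤ |x p.1| * (1 * |y p.2|) := mul_le_mul_of_nonneg_left h1 (abs_nonneg _)
    _ = |x p.1| * |y p.2| := by ring

lemma gossez_tsum_eq (x y : ℕ → ℝ)
    (hx : Summable fun i => |x i|) (hy : Summable fun i => |y i|) :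
    ∑' n, x n * G y n = ∑' p : ℕ × ℕ, x p.1 * (gossezS p.1 p.2 * y p.2) := by
  rw [Summable.tsum_prod' (gossez_summable x y hx hy)
    (fun n => ((hasSum_G y hy.of_abs n).summable.mul_left (x n)))]
  congr 1
  ext n
  rw [← (hasSum_G y hy.of_abs n).tsum_eq, ← tsum_mul_left]

/-- Anti-symmetry of the Gossez operator: `⟪x, G y⟫ = -⟪y, G x⟫`. -/
theorem gossez_antisymmetric (x y : ℕ → ℝ)
    (hx : Summable fun i => |x i|) (hy : Summable fun i => |y i|) :
    ∑' n, x n * G y n = -∑' n, y n * G x n := by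
  rw [gossez_tsum_eq x y hx hy, gossez_tsum_eq y x hy hx]
  have := (Equiv.prodComm ℕ ℕ).tsum_eq (fun p : ℕ × ℕ => y p.1 * (gossezS p.1 p.2 * x p.2))
  rw [← this, ← tsum_neg]
  congr 1
  ext p
  simp only [Equiv.prodComm_apply, Prod.fst_swap, Prod.snd_swap]
  rw [gossezS_antisymm]
  ring
end

section
/- The Gossez operator G : ℓ¹ → ℓ∞, viewed as a linear monotone operator (its graph {(y, G(y))} in ℓ¹ × ℓ∞), is maximal monotone: if (y, z) ∈ ℓ¹ × ℓ∞ satisfies ⟨y − y', z − G(y')⟩ ≥ 0 for all y' ∈ ℓ¹, then z = G(y). -/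
open Filter Topology

/-- The Gossez operator, as a monotone operator from l1 to linf, is maximal monotone:
any pair `(y, z)` monotonically related to its graph lies in the graph. -/
theorem gossez_maximal_monotone (y z : ℕ → ℝ)
    (hy : Summable fun i => |y i|) (hz : BddAbove (Set.range fun n => |z n|))
    (h : ∀ y' : ℕ → ℝ, Summable (fun i => |y' i|) →
      ∑' n, (y n - y' n) * (z n - G y' n) ≥ 0) :
    z = G y := by
  funext k
  have key : ∀ t : ℝ, t * (z k - G y k) ≥ 0 := by
    intro t
    set y' : ℕ → ℝ := fun n => if n = k then y n - t else y n with hy'def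
    have hsum : Summable fun i => |y' i| := by
      refine Summable.of_nonneg_of_le (f := fun i => |y i| + (if i = k then |t| else 0))
        (fun i => abs_nonneg _) (fun i => ?_) (hy.add (hasSum_ite_eq k |t|).summable)
      simp only [hy'def]
      by_cases hik : i = k
      · simp only [hik, if_pos rfl]
        exact abs_sub _ _
      · simp [hik]
    have hGk : G y' k = G y k := by
      unfold G
      congr 1
      · apply tsum_congr
        intro i
        have : k + 1 + i ≠ k := by omega
        simp [hy'def, this]
      · apply Finset.sum_congr rfl
        intro i hi
        have : i ≠ k := by
          have := Finset.mem_range.mp hi; omega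
      -- fallthrough
        simp [hy'def, this]
    have hts : (fun n => (y n - y' n) * (z n - G y' n))
        = fun n => if n = k then t * (z k - G y k) else 0 := by
      funext n
      by_cases hnk : n = k
      · subst hnk
        rw [hGk]
        simp only [hy'def, hGk, if_pos rfl, if_true]
        ring
      · simp [hy'def, hnk]
    have := h y' hsum
    rw [hts, tsum_ite_eq] at this
    exact this
  have h1 := key (-(z k - G y k))
  nlinarith [sq_nonneg (z k - G y k)]
end

section
/- For every y ∈ ℓ¹, the sequence G(y) converges, with lim_{n→∞} (G(y))_n = −∑_{i=1}^∞ y_i. Consequently, G(y) ∈ c₀ if and only if ∑_{i=1}^∞ y_i = 0. -/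
open Filter Topology

/-- For `y` in l1, `(G y) n` tends to `-∑ i, y i`; hence `G y ∈ c₀` iff `∑ i, y i = 0`. -/
theorem gossez_limit (y : ℕ → ℝ) (hy : Summable fun i => |y i|) :
    Tendsto (G y) atTop (𝓝 (-∑' i, y i)) ∧
    (Tendsto (G y) atTop (𝓝 0) ↔ (∑' i, y i) = 0) := by
  have hs : Summable y := hy.of_abs
  have htail : Tendsto (fun n : ℕ => ∑' i : ℕ, y (n + 1 + i)) atTop (𝓝 0) := by
    have h1 : Tendsto (fun n : ℕ => ∑' i : ℕ, y (i + n)) atTop (𝓝 0) :=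
      tendsto_sum_nat_add y
    have h2 : Tendsto (fun n : ℕ => n + 1) atTop atTop := tendsto_add_atTop_nat 1
    refine (h1.comp h2).congr fun n => ?_
    exact tsum_congr fun i => by simp only []; ring_nf
  have hpart : Tendsto (fun n : ℕ => ∑ i ∈ Finset.range n, y i) atTop (𝓝 (∑' i, y i)) :=
    hs.hasSum.tendsto_sum_nat
  have hmain : Tendsto (G y) atTop (𝓝 (-∑' i, y i)) := by
    have := htail.sub hpart
    simp only [zero_sub] at this
    exact this
  refine ⟨hmain, ?_, ?_⟩
  · intro h
    have := tendsto_nhds_unique hmain h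
    linarith [this]
  · intro h
    rw [h] at hmain
    simpa using hmain
end

section
/- The operator T : c₀ ⇉ ℓ¹ defined by T(x) = {y ∈ ℓ¹ : −G(y) = x} has range exactly {y ∈ ℓ¹ : ∑_{i=1}^∞ y_i = 0}. -/
open Filter Topology

lemma negG_tendsto {y : ℕ → ℝ} (hy : Summable y) :
    Tendsto (fun n => -G y n) atTop (𝓝 (∑' i, y i)) := by
  have h1 : ∀ n, -G y n =
      (∑ i ∈ Finset.range (n+1), y i) + (∑ i ∈ Finset.range n, y i) - ∑' i, y i := by
    intro n
    have h := Summable.sum_add_tsum_nat_add (n+1) hy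
    have h2 : (∑' i, y (n + 1 + i)) = ∑' i, y (i + (n+1)) := by
      congr 1; funext i; rw [Nat.add_comm]
    simp only [G, h2]
    linarith
  simp only [h1]
  have hp := hy.hasSum.tendsto_sum_nat
  have hp1 : Tendsto (fun n => ∑ i ∈ Finset.range (n+1), y i) atTop (𝓝 (∑' i, y i)) :=
    hp.comp (tendsto_add_atTop_nat 1)
  have := (hp1.add hp).sub_const (∑' i, y i)
  simpa using this

/-- The range of `T : c₀ ⇉ l1`, `T x = {y : -G y = x}`, is `{y ∈ l1 : ∑ i, y i = 0}`. -/
theorem range_T :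
    {y : ℕ → ℝ | Summable (fun i => |y i|) ∧
      ∃ x : ℕ → ℝ, Tendsto x atTop (𝓝 0) ∧ (fun n => -G y n) = x} =
    {y : ℕ → ℝ | Summable (fun i => |y i|) ∧ (∑' i, y i) = 0} := by
  ext y
  simp only [Set.mem_setOf_eq]
  constructor
  · rintro ⟨hs, x, hx, hgx⟩
    refine ⟨hs, ?_⟩
    have hy : Summable y := summable_abs_iff.mp hs
    have h1 := negG_tendsto hy
    rw [hgx] at h1
    exact tendsto_nhds_unique h1 hx
  · rintro ⟨hs, hsum⟩
    have hy : Summable y := summable_abs_iff.mp hs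
    refine ⟨hs, fun n => -G y n, ?_, rfl⟩
    have := negG_tendsto hy
    rwa [hsum] at this
end

section
/- The operator T : c₀ ⇉ ℓ¹, T(x) = {y ∈ ℓ¹ : −G(y) = x}, is single-valued on its domain: if y, y' ∈ ℓ¹ and −G(y) = −G(y') = x, then y = y'. -/
open Filter Topology

lemma G_eq (y : ℕ → ℝ) (hy : Summable y) (n : ℕ) :
    G y n = (∑' i, y i) - (∑ i ∈ Finset.range (n+1), y i) - ∑ i ∈ Finset.range n, y i := by
  unfold G
  have h1 : (∑' i : ℕ, y (n + 1 + i)) = ∑' i : ℕ, y (i + (n+1)) := by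
    apply tsum_congr; intro i; rw [Nat.add_comm]
  have h2 := Summable.sum_add_tsum_nat_add (f := y) (n+1) hy
  rw [h1]
  linarith [h2]

/-- `T x = {y : -G y = x}` is single valued on its domain. -/
theorem T_single_valued (x : ℕ → ℝ) (y y' : ℕ → ℝ)
    (hy : Summable fun i => |y i|) (hy' : Summable fun i => |y' i|)
    (h : (fun n => -G y n) = x) (h' : (fun n => -G y' n) = x) : y = y' := by
  have hsy : Summable y := hy.of_abs
  have hsy' : Summable y' := hy'.of_abs
  have hG : ∀ n, G y n = G y' n := by
    intro n
    have := congrFun h n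
    have := congrFun h' n
    linarith
  set P : ℕ → ℝ := fun n => ∑ i ∈ Finset.range n, y i with hP
  set P' : ℕ → ℝ := fun n => ∑ i ∈ Finset.range n, y' i with hP'
  set Q : ℕ → ℝ := fun n => P n - P' n with hQ
  set c : ℝ := (∑' i, y i) - (∑' i, y' i) with hc
  have key : ∀ n, Q n + Q (n+1) = c := by
    intro n
    have e1 := G_eq y hsy n
    have e2 := G_eq y' hsy' n
    have := hG n
    simp only [hQ, hP, hP', hc]
    rw [e1, e2] at this
    linarith
  have hQval : ∀ n, Q n = if Even n then 0 else c := by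
    intro n
    induction n with
    | zero => simp [hQ, hP, hP']
    | succ k ih =>
      have := key k
      rcases Nat.even_or_odd k with he | ho
      · simp [he, Nat.even_add_one, he] at ih ⊢
        linarith
      · have hne : ¬ Even k := Nat.not_even_iff_odd.mpr ho
        simp [hne, Nat.even_add_one] at ih ⊢
        linarith
  have hQtend : Tendsto Q atTop (𝓝 c) := by
    have t1 : Tendsto P atTop (𝓝 (∑' i, y i)) := hsy.hasSum.tendsto_sum_nat
    have t2 : Tendsto P' atTop (𝓝 (∑' i, y' i)) := hsy'.hasSum.tendsto_sum_nat
    exact t1.sub t2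
  have hc0 : c = 0 := by
    have hmul : Tendsto (fun n : ℕ => 2*n) atTop atTop :=
      tendsto_atTop_mono (fun n => by omega : ∀ n : ℕ, n ≤ 2*n) tendsto_id
    have hsub : Tendsto (fun n => Q (2*n)) atTop (𝓝 c) := hQtend.comp hmul
    have heq : (fun n => Q (2*n)) = fun _ => (0:ℝ) := by
      funext n; rw [hQval]; simp [Nat.even_mul]
    rw [heq] at hsub
    exact (tendsto_nhds_unique tendsto_const_nhds hsub).symm
  have hQ0 : ∀ n, Q n = 0 := by
    intro n; rw [hQval]; split <;> simp [hc0]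
  funext n
  have h1 := hQ0 n
  have h2 := hQ0 (n+1)
  simp only [hQ, hP, hP', Finset.sum_range_succ] at h1 h2
  linarith
end

section
/- Suppose x ∈ c₀ and y ∈ ℓ¹ satisfy x_{m+1} − x_m = y_{m+1} + y_m for all m ≥ 1. Then for every i, x_i = −[y_i + 2∑_{k=i+1}^∞ y_k] = −[(G(y))_i + ∑_{k=1}^∞ y_k]. -/
open Filter Topology

/-- If `x ∈ c₀`, `y ∈ l1` and `x (m+1) - x m = y (m+1) + y m` for all `m`, then
`x i = -(y i + 2 ∑_{k>i} y k) = -((G y) i + ∑ k, y k)`. -/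
theorem recover_x_from_y (x y : ℕ → ℝ)
    (hx : Tendsto x atTop (𝓝 0)) (hy : Summable fun i => |y i|)
    (h : ∀ m, x (m + 1) - x m = y (m + 1) + y m) :
    ∀ i, x i = -(y i + 2 * ∑' k, y (i + 1 + k)) ∧ x i = -(G y i + ∑' k, y k) := by
  have hy' : Summable y := summable_abs_iff.mp hy
  set T : ℝ := ∑' k, y k with hT
  set s : ℕ → ℝ := fun n => ∑' k, y (n + k) with hsdef
  have hs : ∀ n, s n = T - ∑ i ∈ Finset.range n, y i := by
    intro n
    have := Summable.sum_add_tsum_nat_add (f := y) n hy'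
    simp only [hsdef]
    simp only [add_comm] at this
    linarith
  -- z is constant
  set z : ℕ → ℝ := fun n => x n + y n + 2 * s (n + 1) with hzdef
  have hzstep : ∀ m, z (m + 1) = z m := by
    intro m
    have h1 := hs (m + 1)
    have h2 := hs (m + 2)
    have h3 : ∑ i ∈ Finset.range (m + 2), y i
        = ∑ i ∈ Finset.range (m + 1), y i + y (m + 1) := Finset.sum_range_succ y (m + 1)
    have h4 := h m
    simp only [hzdef]
    have : s (m + 1 + 1) = s (m + 1) - y (m + 1) := by
      rw [h1, h2, h3]; ring
    rw [this]; linarith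
  have hzconst : ∀ n, z n = z 0 := by
    intro n
    induction n with
    | zero => rfl
    | succ k ih => rw [hzstep k, ih]
  -- z tends to 0
  have hpart : Tendsto (fun n => ∑ i ∈ Finset.range n, y i) atTop (𝓝 T) :=
    hy'.hasSum.tendsto_sum_nat
  have hstend : Tendsto s atTop (𝓝 0) := by
    have : Tendsto (fun n => T - ∑ i ∈ Finset.range n, y i) atTop (𝓝 (T - T)) :=
      tendsto_const_nhds.sub hpart
    simpa [funext hs, sub_self] using this
  have hytend : Tendsto y atTop (𝓝 0) := hy'.tendsto_atTop_zero
  have hstend' : Tendsto (fun n => s (n + 1)) atTop (𝓝 0) :=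
    hstend.comp (tendsto_add_atTop_nat 1)
  have hztend : Tendsto z atTop (𝓝 0) := by
    have : Tendsto (fun n => x n + y n + 2 * s (n + 1)) atTop (𝓝 (0 + 0 + 2 * 0)) :=
      (hx.add hytend).add (hstend'.const_mul 2)
    simpa using this
  have hz0 : z 0 = 0 := by
    have : Tendsto z atTop (𝓝 (z 0)) := by
      have : z = fun _ => z 0 := funext hzconst
      rw [this]; exact tendsto_const_nhds
    exact tendsto_nhds_unique this hztend
  have hzzero : ∀ n, z n = 0 := fun n => (hzconst n).trans hz0
  intro i
  have hzi := hzzero i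
  have hfirst : x i = -(y i + 2 * s (i + 1)) := by
    simp only [hzdef] at hzi; linarith
  have htail : s (i + 1) = ∑' k, y (i + 1 + k) := rfl
  constructor
  · rw [← htail]; exact hfirst
  · have hGsum : G y i + T = y i + 2 * s (i + 1) := by
      have hG : G y i = s (i + 1) - ∑ k ∈ Finset.range i, y k := rfl
      have h1 := hs (i + 1)
      have h2 : ∑ k ∈ Finset.range (i + 1), y k
          = ∑ k ∈ Finset.range i, y k + y i := Finset.sum_range_succ y i
      rw [hG, h1, h2]; ring
    rw [hfirst]; linarith
end

section
/- The operator T : c₀ ⇉ ℓ¹ with graph {(−G(y), y) : y ∈ ℓ¹, ∑_i y_i = 0} is maximal monotone: if x ∈ c₀, y ∈ ℓ¹ satisfy ⟨x − x', y − y'⟩ ≥ 0 for all (x', y') in the graph of T, then x = −G(y) and ∑_i y_i = 0. -/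
open Filter Topology

private lemma tail_summable {f : ℕ → ℝ} (hf : Summable f) (n : ℕ) :
    Summable fun i => f (n + 1 + i) :=
  ((summable_nat_add_iff (n + 1)).mpr hf).congr (fun i => by rw [Nat.add_comm])

private lemma slope_zero {c d : ℝ} (h : ∀ t : ℝ, 0 ≤ c + t * d) : d = 0 := by
  by_contra hd
  have h1 := h ((-c - 1) / d)
  rw [div_mul_cancel₀ _ hd] at h1
  linarith

/-- The operator with graph `{(-G y', y') : y' ∈ l1, ∑ i, y' i = 0}` is maximal monotone
in `c₀ × l1`. -/
theorem T_maximal_monotone (x y : ℕ → ℝ)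
    (hx : Tendsto x atTop (𝓝 0)) (hy : Summable fun i => |y i|)
    (h : ∀ y' : ℕ → ℝ, Summable (fun i => |y' i|) → (∑' i, y' i) = 0 →
      ∑' n, (x n - (-G y' n)) * (y n - y' n) ≥ 0) :
    (∀ n, x n = -G y n) ∧ (∑' i, y i) = 0 := by
  have hy' : Summable y := hy.of_abs
  set S : ℝ := ∑' i, y i with hS
  set u : ℕ → ℝ := fun n => x n + G y n with hu
  have key : ∀ j k : ℕ, j < k → ∀ a b : ℝ, a + b = S → 0 ≤ u j * a + u k * b := by
    intro j k hjk a b hab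
    set w : ℕ → ℝ := fun n => (if n = j then a else 0) + (if n = k then b else 0) with hw
    have hwsum : HasSum w (a + b) := (hasSum_ite_eq j a).add (hasSum_ite_eq k b)
    set y'' : ℕ → ℝ := fun n => y n - w n with hy''def
    have hy''abs : Summable fun i => |y'' i| := by
      have hmaj : Summable (fun i =>
          |y i| + ((if i = j then |a| else 0) + (if i = k then |b| else 0))) :=
        hy.add (((hasSum_ite_eq j |a|).add (hasSum_ite_eq k |b|)).summable)
      refine Summable.of_nonneg_of_le (fun i => abs_nonneg _) (fun i => ?_) hmaj
      have h1 : |w i| ≤ (if i = j then |a| else 0) + (if i = k then |b| else 0) := by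
        simp only [hw]
        calc |(if i = j then a else 0) + (if i = k then b else 0)|
            ≤ |(if i = j then a else 0)| + |(if i = k then b else 0)| := abs_add_le _ _
          _ = _ := by rw [apply_ite abs, apply_ite abs, abs_zero]
      calc |y'' i| = |y i - w i| := rfl
        _ ≤ |y i| + |w i| := abs_sub _ _
        _ ≤ _ := by linarith
    have hy''sum : ∑' i, y'' i = 0 := by
      simp only [hy''def]
      rw [Summable.tsum_sub hy' hwsum.summable, hwsum.tsum_eq, hab, ← hS, sub_self]
    have h1 := h y'' hy''abs hy''sum
    -- values of G w
    have hwj : (∑' i, w (j + 1 + i)) = b := by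
      have he : ∀ i, w (j + 1 + i) = if i = k - (j + 1) then b else 0 := by
        intro i
        simp only [hw]
        have h1 : ¬ (j + 1 + i = j) := by omega
        have h2 : (j + 1 + i = k) ↔ (i = k - (j + 1)) := by omega
        simp [h1, h2]
      rw [tsum_congr he, tsum_ite_eq]
    have hwk : (∑' i, w (k + 1 + i)) = 0 := by
      have he : ∀ i, w (k + 1 + i) = 0 := by
        intro i
        simp only [hw]
        have h1 : ¬ (k + 1 + i = j) := by omega
        have h2 : ¬ (k + 1 + i = k) := by omega
        simp [h1, h2]
      rw [tsum_congr he, tsum_zero]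
    have hwhj : ∑ i ∈ Finset.range j, w i = 0 := by
      apply Finset.sum_eq_zero
      intro i hi
      simp only [Finset.mem_range] at hi
      have h1 : ¬ (i = j) := by omega
      have h2 : ¬ (i = k) := by omega
      simp [hw, h1, h2]
    have hwhk : ∑ i ∈ Finset.range k, w i = a := by
      simp only [hw]
      rw [Finset.sum_add_distrib]
      rw [Finset.sum_ite_eq' (Finset.range k) j (fun _ => a),
        Finset.sum_ite_eq' (Finset.range k) k (fun _ => b)]
      simp [Finset.mem_range, hjk]
    have hGwj : G w j = b := by
      simp only [G, hwj, hwhj]; ring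
    have hGwk : G w k = -a := by
      simp only [G, hwk, hwhk]; ring
    have hGsub : ∀ n, G y'' n = G y n - G w n := by
      intro n
      simp only [G, hy''def]
      rw [Summable.tsum_sub (tail_summable hy' n) (tail_summable hwsum.summable n),
        Finset.sum_sub_distrib]
      ring
    have hsupp : ∀ n ∉ ({j, k} : Finset ℕ), (x n - (-G y'' n)) * (y n - y'' n) = 0 := by
      intro n hn
      simp only [Finset.mem_insert, Finset.mem_singleton, not_or] at hn
      have : y n - y'' n = 0 := by simp [hy''def, hw, hn.1, hn.2]
      rw [this, mul_zero]
    rw [tsum_eq_sum hsupp, Finset.sum_pair (Nat.ne_of_lt hjk)] at h1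
    have e1 : y j - y'' j = a := by
      simp [hy''def, hw, Nat.ne_of_lt hjk]
    have e2 : y k - y'' k = b := by
      simp [hy''def, hw, (Nat.ne_of_lt hjk).symm]
    rw [e1, e2, hGsub j, hGsub k, hGwj, hGwk] at h1
    calc (0:ℝ) ≤ (x j - -(G y j - b)) * a + (x k - -(G y k - -a)) * b := h1
      _ = u j * a + u k * b := by simp only [hu]; ring
  -- u is constant
  have hconst : ∀ n, u n = u 0 := by
    intro n
    rcases Nat.eq_zero_or_pos n with h0 | h0
    · rw [h0]
    · have hg : ∀ t : ℝ, 0 ≤ u 0 * S + t * (u n - u 0) := by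
        intro t
        have := key 0 n h0 (S - t) t (by ring)
        calc (0:ℝ) ≤ u 0 * (S - t) + u n * t := this
          _ = u 0 * S + t * (u n - u 0) := by ring
      have := slope_zero hg
      linarith
  -- limit of u
  have hlim : Tendsto u atTop (𝓝 (-S)) := by
    have t1 : Tendsto (fun n => ∑' i, y (n + 1 + i)) atTop (𝓝 0) := by
      have h2 := (tendsto_sum_nat_add y).comp (tendsto_add_atTop_nat 1)
      refine h2.congr fun n => ?_
      exact tsum_congr fun i => by rw [Nat.add_comm]
    have t2 : Tendsto (fun n => ∑ i ∈ Finset.range n, y i) atTop (𝓝 S) :=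
      hy'.hasSum.tendsto_sum_nat
    have h3 := hx.add (t1.sub t2)
    rw [zero_add, zero_sub] at h3
    exact h3
  have hu0 : u 0 = -S := (tendsto_nhds_unique (hlim.congr hconst) tendsto_const_nhds).symm
  have hS0 : S = 0 := by
    have hk := key 0 1 one_pos S 0 (by ring)
    rw [hu0] at hk
    nlinarith [sq_nonneg S]
  refine ⟨fun n => ?_, hS0⟩
  have hn := hconst n
  rw [hu0, hS0] at hn
  simp only [hu] at hn
  linarith [hn]
end

section
/- Let e = (1,1,1,…) ∈ ℓ∞ and T : c₀ ⇉ ℓ¹ with graph {(−G(y'), y') : y' ∈ ℓ¹, ∑_i y'_i = 0}. Then for every y ∈ ℓ¹, α ∈ ℝ, and (x', y') ∈ graph(T): ⟨−G(y) + α e − x', y − y'⟩ = α⟨y, e⟩, where the pairing is between ℓ∞ and ℓ¹. -/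
open Filter Topology

/-- With `e = (1,1,1,…)`: for `(x', y') = (-G y', y')` in the graph of `T` and any
`y ∈ l1`, `α ∈ ℝ`, one has `⟪-G y + α e - x', y - y'⟫ = α ⟪y, e⟫`. -/
theorem pairing_identity (y y' : ℕ → ℝ) (α : ℝ)
    (hy : Summable fun i => |y i|) (hy' : Summable fun i => |y' i|)
    (hsum : (∑' i, y' i) = 0) :
    ∑' n, ((-G y n + α) - (-G y' n)) * (y n - y' n) = α * ∑' n, y n := by
  have hya : Summable y := summable_abs_iff.1 hy
  have hy'a : Summable y' := summable_abs_iff.1 hy'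
  set z : ℕ → ℝ := fun n => y n - y' n with hzdef
  have hz : Summable z := hya.sub hy'a
  have hza : Summable fun n => |z n| := summable_abs_iff.2 hz
  set S : ℝ := ∑' n, z n with hS
  set P : ℕ → ℝ := fun n => ∑ i ∈ Finset.range n, z i with hPdef
  -- shifted tails are summable
  have shiftS : ∀ (u : ℕ → ℝ), Summable u → ∀ n : ℕ, Summable fun i => u (n + 1 + i) := by
    intro u hu n
    have h : Summable fun i => u (i + (n + 1)) := (summable_nat_add_iff (n + 1)).2 hu
    convert h using 2 with i
    ring_nf
  -- tail value
  have tail : ∀ n : ℕ, (∑' i, z (n + 1 + i)) = S - P (n + 1) := by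
    intro n
    have h := Summable.sum_add_tsum_nat_add (f := z) (n + 1) hz
    have he : (fun i => z (n + 1 + i)) = fun i => z (i + (n + 1)) := by
      funext i; congr 1; ring
    rw [he]
    simp only [hPdef, hS]
    linarith [h]
  -- G z n
  have hGz : ∀ n, G z n = S - 2 * P n - z n := by
    intro n
    unfold G
    rw [tail n]
    have : P (n + 1) = P n + z n := by
      simp [hPdef, Finset.sum_range_succ]
    rw [this]
    simp only [hPdef]
    ring
  -- linearity: G y n - G y' n = G z n
  have hlin : ∀ n, G y n - G y' n = G z n := by
    intro n
    unfold G
    have h1 := shiftS y hya n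
    have h2 := shiftS y' hy'a n
    have : (∑' i, z (n + 1 + i)) = (∑' i, y (n + 1 + i)) - ∑' i, y' (n + 1 + i) := by
      rw [← Summable.tsum_sub h1 h2]
    rw [this, Finset.sum_sub_distrib]
    ring
  -- integrand rewriting
  have hfun : (fun n => ((-G y n + α) - (-G y' n)) * (y n - y' n)) =
      fun n => α * z n + -(S * z n) + (2 * (z n * P n) + z n ^ 2) := by
    funext n
    have h1 : -G y n + α - -G y' n = α - G z n := by
      rw [← hlin n]; ring
    rw [h1, hGz n]
    show (α - (S - 2 * P n - z n)) * z n = _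
    ring
  -- bound on partial sums
  set C : ℝ := ∑' n, |z n| with hC
  have hPle : ∀ n, |P n| ≤ C := by
    intro n
    calc |P n| ≤ ∑ i ∈ Finset.range n, |z i| := by
          simpa [hPdef] using Finset.abs_sum_le_sum_abs z (Finset.range n)
      _ ≤ C := Summable.sum_le_tsum _ (fun i _ => abs_nonneg _) hza
  have hzle : ∀ n, |z n| ≤ C := fun n => Summable.le_tsum hza n (fun i _ => abs_nonneg _)
  -- summability of the quadratic part
  have hq : Summable fun n => 2 * (z n * P n) + z n ^ 2 := by
    have h1 : Summable fun n => 2 * (z n * P n) := by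
      apply Summable.of_abs
      refine Summable.of_nonneg_of_le (fun n => abs_nonneg _) (fun n => ?_) (hza.mul_right (2 * C))
      · have : |2 * (z n * P n)| = 2 * (|z n| * |P n|) := by
          rw [abs_mul, abs_mul]; simp [abs_of_nonneg]
        rw [this]
        have := hPle n
        nlinarith [abs_nonneg (z n), abs_nonneg (P n)]
    have h2 : Summable fun n => z n ^ 2 := by
      apply Summable.of_abs
      refine Summable.of_nonneg_of_le (fun n => abs_nonneg _) (fun n => ?_) (hza.mul_right C)
      · have : |z n ^ 2| = |z n| * |z n| := by
          rw [sq, abs_mul]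
        rw [this]
        exact mul_le_mul_of_nonneg_left (hzle n) (abs_nonneg _)
    exact h1.add h2
  -- tsum of the quadratic part is S^2
  have hqsum : HasSum (fun n => 2 * (z n * P n) + z n ^ 2) (S ^ 2) := by
    have hq' := hq.hasSum
    have hpart : ∀ N, ∑ n ∈ Finset.range N, (2 * (z n * P n) + z n ^ 2) = P N ^ 2 := by
      intro N
      induction N with
      | zero => simp [hPdef]
      | succ N ih =>
        rw [Finset.sum_range_succ, ih]
        have : P (N + 1) = P N + z N := by simp [hPdef, Finset.sum_range_succ]
        rw [this]; ring
    have ht1 : Tendsto (fun N => ∑ n ∈ Finset.range N, (2 * (z n * P n) + z n ^ 2))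
        atTop (𝓝 (∑' n, (2 * (z n * P n) + z n ^ 2))) := hq'.tendsto_sum_nat
    have ht2 : Tendsto (fun N => P N ^ 2) atTop (𝓝 (S ^ 2)) := by
      exact (hz.hasSum.tendsto_sum_nat).pow 2
    have heq : (∑' n, (2 * (z n * P n) + z n ^ 2)) = S ^ 2 := by
      apply tendsto_nhds_unique _ ht2
      simpa only [hpart] using ht1
    rw [← heq]; exact hq'
  -- combine
  have htot : HasSum (fun n => α * z n + -(S * z n) + (2 * (z n * P n) + z n ^ 2))
      (α * S + -(S * S) + S ^ 2) := by
    exact ((hz.hasSum.mul_left α).add (hz.hasSum.mul_left S).neg).add hqsum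
  rw [hfun, htot.tsum_eq]
  have hSval : S = ∑' n, y n := by
    rw [hS, hzdef, Summable.tsum_sub hya hy'a, hsum, sub_zero]
  rw [hSval]; ring
end

section
/- Let X be a closed subspace of a real Banach space Ω, T : X ⇉ X* maximal monotone, and define S : Ω ⇉ Ω* by (w, w*) ∈ graph(S) iff w ∈ X and (w, w*|_X) ∈ graph(T). Then S is maximal monotone: any (z, z*) ∈ Ω × Ω* monotonically related to graph(S) satisfies z ∈ X and (z, z*|_X) ∈ graph(T). -/
/-- Let `X` be a closed subspace of a real Banach space `Ω` and `T : X ⇉ X*`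
maximal monotone. The operator `S : Ω ⇉ Ω*` with `(w, w*) ∈ S` iff `w ∈ X` and
`(w, w*|_X) ∈ T` is maximal monotone: any `(z, z*)` monotonically related to the
graph of `S` satisfies `z ∈ X` and `(z, z*|_X) ∈ T`. -/
theorem S_maximal_monotone (Ω : Type*) [NormedAddCommGroup Ω] [NormedSpace ℝ Ω]
    [CompleteSpace Ω] (X : Subspace ℝ Ω) (hX : IsClosed (X : Set Ω))
    (T : Set (X × (X →L[ℝ] ℝ)))
    (hTmono : ∀ p ∈ T, ∀ q ∈ T, 0 ≤ (p.2 - q.2) (p.1 - q.1))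
    (hTmax : ∀ (x : X) (x' : X →L[ℝ] ℝ),
      (∀ p ∈ T, 0 ≤ (p.2 - x') (p.1 - x)) → (x, x') ∈ T)
    (z : Ω) (z' : Ω →L[ℝ] ℝ)
    (hrel : ∀ (w : Ω) (w' : Ω →L[ℝ] ℝ) (hw : w ∈ X),
      (⟨w, hw⟩, w'.comp X.subtypeL) ∈ T → 0 ≤ (w' - z') (w - z)) :
    ∃ hz : z ∈ X, (⟨z, hz⟩, z'.comp X.subtypeL) ∈ T := by
  -- T is nonempty
  have hTne : T.Nonempty := by
    by_contra h
    rw [Set.not_nonempty_iff_eq_empty] at h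
    have := hTmax 0 0 (by simp [h])
    simp [h] at this
  -- First: z ∈ X
  have hz : z ∈ X := by
    by_contra hzX
    obtain ⟨f, u, hfX, hfz⟩ :=
      geometric_hahn_banach_closed_point (X.convex) hX hzX
    -- f vanishes on X
    have hf0 : ∀ w ∈ X, f w = 0 := by
      intro w hw
      by_contra hne
      have h1 : f (((u + 1) / f w) • w) < u := hfX _ (X.smul_mem _ hw)
      rw [map_smul, smul_eq_mul, div_mul_cancel₀ _ hne] at h1
      linarith
    have hfzpos : f z ≠ 0 := by
      have h0 : f (0:Ω) < u := hfX 0 X.zero_mem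
      simp only [map_zero] at h0
      exact (lt_trans h0 hfz).ne'
    obtain ⟨p, hp⟩ := hTne
    obtain ⟨g, hg, -⟩ := exists_extension_norm_eq X p.2
    have hfa : f ((p.1 : Ω) - z) = -f z := by
      rw [map_sub, hf0 _ p.1.2]; ring
    have hane : f ((p.1 : Ω) - z) ≠ 0 := by
      rw [hfa]; simpa using hfzpos
    set a : ℝ := f ((p.1 : Ω) - z) with ha
    set c : ℝ := (g - z') ((p.1 : Ω) - z) with hc
    set t : ℝ := -(c + 1) / a with ht
    have hcomp : (g + t • f).comp X.subtypeL = p.2 := by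
      ext x
      simp [hg x, hf0 x x.2]
    have key := hrel (p.1 : Ω) (g + t • f) p.1.2 (by
      rw [hcomp]; simpa using hp)
    have : (g + t • f - z') ((p.1 : Ω) - z) = c + t * a := by
      simp [hc, ha]; ring
    rw [this, ht] at key
    rw [div_mul_cancel₀ _ hane] at key
    linarith
  -- Now show membership in T via maximality
  refine ⟨hz, hTmax _ _ ?_⟩
  intro p hp
  obtain ⟨g, hg, -⟩ := exists_extension_norm_eq X p.2
  have hcomp : g.comp X.subtypeL = p.2 := by ext x; simp [hg x]
  have key := hrel (p.1 : Ω) g p.1.2 (by rw [hcomp]; simpa using hp)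
  have heq : (p.2 - z'.comp X.subtypeL) (p.1 - ⟨z, hz⟩) = (g - z') ((p.1 : Ω) - z) := by
    have := hg (p.1 - ⟨z, hz⟩)
    simp only [ContinuousLinearMap.sub_apply, ContinuousLinearMap.comp_apply,
      Submodule.subtypeL_apply] at *
    rw [← this]
    simp
  rw [heq]
  exact key
end

section
/- Let X be a closed subspace of a Banach space Ω, T : X ⇉ X*, and S : Ω ⇉ Ω* defined by (w, w*) ∈ graph(S) iff w ∈ X and (w, w*|_X) ∈ graph(T). Suppose there exist x* ∈ X*, x** ∈ X** with sup over (y, y*) ∈ graph(T) of [⟨y, x* − y*⟩ + ⟨y*, x**⟩] < ⟨x*, x**⟩. Let z* ∈ Ω* be any continuous extension of x* and define z** ∈ Ω** by ⟨z*, z**⟩ = ⟨z*|_X, x**⟩. Then sup over (w, w*) ∈ graph(S) of [⟨w, z*⟩ + ⟨w*, z**⟩ − ⟨w, w*⟩] < ⟨z*, z**⟩. -/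
/-- If `T : X ⇉ X*` fails the type-(D) Fitzpatrick inequality at some
`(x*, x**) ∈ X* × X**`, then the extended operator `S : Ω ⇉ Ω*` fails it at
`(z*, z**)`, where `z*` is any continuous extension of `x*` and
`⟪w*, z**⟫ = ⟪w*|_X, x**⟫`. -/
theorem S_non_type_D (Ω : Type*) [NormedAddCommGroup Ω] [NormedSpace ℝ Ω]
    [CompleteSpace Ω] (X : Subspace ℝ Ω) (hX : IsClosed (X : Set Ω))
    (T : Set (X × (X →L[ℝ] ℝ)))
    (xstar : X →L[ℝ] ℝ) (xss : (X →L[ℝ] ℝ) →L[ℝ] ℝ)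
    (hfail : ∃ c : ℝ, c < xss xstar ∧
      ∀ p ∈ T, (xstar - p.2) p.1 + xss p.2 ≤ c)
    (zstar : Ω →L[ℝ] ℝ) (hext : zstar.comp X.subtypeL = xstar) :
    ∃ c : ℝ, c < xss (zstar.comp X.subtypeL) ∧
      ∀ (w : Ω) (wstar : Ω →L[ℝ] ℝ) (hw : w ∈ X),
        (⟨w, hw⟩, wstar.comp X.subtypeL) ∈ T →
        zstar w + xss (wstar.comp X.subtypeL) - wstar w ≤ c := by
  obtain ⟨c, hc, hT⟩ := hfail
  refine ⟨c, by rwa [hext], ?_⟩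
  intro w wstar hw hmem
  have h := hT _ hmem
  have h2 : xstar ⟨w, hw⟩ = zstar w := by rw [← hext]; rfl
  have h3 : (wstar.comp X.subtypeL) ⟨w, hw⟩ = wstar w := rfl
  rw [ContinuousLinearMap.sub_apply, h2, h3] at h
  linarith
end
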